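/- Let X_j = (cos(jθ+φ), sin(jθ+φ)) on the unit circle, P = (p,0) with p ≠ ±1, and let L_j be the line through X_j perpendicular to PX_j. Then each L_j is tangent to the ellipse/hyperbola x² + y²/(1-p²) = 1. -/

import Mathlib

open Real

/-- For `X_j = (cos (jθ+φ), sin (jθ+φ))` on the unit circle and `P = (p, 0)`, `p ≠ ±1`,
the line `L_j` through `X_j` perpendicular to `P X_j` is tangent to the conic
`x² + y²/(1-p²) = 1` (tangency expressed by a vanishing discriminant of the restricted
quadratic). -/
theorem negative_pedal_line_tangent (p θ φ : ℝ) (hp : 0 < p) (hp1 : p ≠ 1) (j : ℤ) :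
    ∃ a b k : ℝ,
      (∀ s : ℝ,
        (Real.cos ((j : ℝ) * θ + φ) + s * (-(Real.sin ((j : ℝ) * θ + φ)))) ^ 2
          + (Real.sin ((j : ℝ) * θ + φ) + s * (Real.cos ((j : ℝ) * θ + φ) - p)) ^ 2
              / (1 - p ^ 2) - 1
        = a * s ^ 2 + b * s + k) ∧
      b ^ 2 - 4 * a * k = 0 := by
  set c := Real.cos ((j : ℝ) * θ + φ) with hc
  set s0 := Real.sin ((j : ℝ) * θ + φ) with hs0
  have hpy : s0 ^ 2 + c ^ 2 = 1 := Real.sin_sq_add_cos_sq _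
  have hne : 1 - p ^ 2 ≠ 0 := by
    intro h
    rcases mul_eq_zero.mp (show (1 - p) * (1 + p) = 0 by nlinarith) with h' | h'
    · exact hp1 (by linarith)
    · linarith
  refine ⟨s0 ^ 2 + (c - p) ^ 2 / (1 - p ^ 2),
    -2 * c * s0 + 2 * s0 * (c - p) / (1 - p ^ 2),
    c ^ 2 + s0 ^ 2 / (1 - p ^ 2) - 1, fun s => by field_simp; ring, ?_⟩
  field_simp
  linear_combination (-4 * (1 - p ^ 2) ^ 3 * (s0 ^ 2 + (c - p) ^ 2) + (8 * c * p ^ 3 * (2 - 3 * p ^ 2 + p ^ 4) - 8 * (s0 ^ 2 + c ^ 2) * p ^ 2 + 4 * (3 * (s0 ^ 2 + c ^ 2) - 2) * p ^ 4 - 4 * ((s0 ^ 2 + c ^ 2) - 3) * p ^ 6 - 4 * p ^ 8)) * hpy
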